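/- For every ε ∈ (−1,1), every z = (z₀,z₁) ∈ ℂ² \ {0}, and every v = (v₀,v₁) ∈ ℂ², the pullback identity α_ε(π(z))(Dπ(z)·v) = (2 / ((1+ε)|z₀|² + (1−ε)|z₁|²)) · ( Im(conj(z₀)·v₀) + Im(conj(z₁)·v₁) ) holds, where Dπ(z) denotes the Fréchet derivative of π at z (over ℝ). -/

import Mathlib

open Complex

/-- The map `π : ℂ² → ℂ³`, `π(z₀,z₁) = (√2·z₀z₁, z₀², −i·z₁²)`. -/
noncomputable def brPi (z : ℂ × ℂ) : ℂ × ℂ × ℂ :=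
  ((Real.sqrt 2 : ℂ) * z.1 * z.2, z.1 ^ 2, -Complex.I * z.2 ^ 2)

/-- `H_ε(w) = |w₁|² + |w₂|² + |w₃|² + ε(|w₂|² − |w₃|²)`. -/
noncomputable def Heps (ε : ℝ) (w : ℂ × ℂ × ℂ) : ℝ :=
  ‖w.1‖ ^ 2 + ‖w.2.1‖ ^ 2 + ‖w.2.2‖ ^ 2
    + ε * (‖w.2.1‖ ^ 2 - ‖w.2.2‖ ^ 2)

/-- The `1`-form `α_ε(w)(u) = H_ε(w)⁻¹·∑_{j=1}^3 Im(conj(w_j)·u_j)`. -/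
noncomputable def alphaEps (ε : ℝ) (w u : ℂ × ℂ × ℂ) : ℝ :=
  (Heps ε w)⁻¹ *
    (((starRingEnd ℂ) w.1 * u.1).im + ((starRingEnd ℂ) w.2.1 * u.2.1).im
      + ((starRingEnd ℂ) w.2.2 * u.2.2).im)

/-- For every `ε ∈ (−1,1)`, every `z ∈ ℂ² \ {0}` and every `v ∈ ℂ²`:
`α_ε(π(z))(Dπ(z)·v) = (2 / ((1+ε)|z₀|² + (1−ε)|z₁|²)) · (Im(conj z₀·v₀) + Im(conj z₁·v₁))`,
where `Dπ(z)` is the real Fréchet derivative of `π` at `z`. -/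
lemma brPi_fderiv (z v : ℂ × ℂ) :
    fderiv ℝ brPi z v = ((Real.sqrt 2 : ℂ) * (v.1 * z.2 + z.1 * v.2),
      2 * z.1 * v.1, -Complex.I * (2 * z.2 * v.2)) := by
  have hf : HasFDerivAt (𝕜 := ℝ) Prod.fst (ContinuousLinearMap.fst ℝ ℂ ℂ) z := hasFDerivAt_fst
  have hs : HasFDerivAt (𝕜 := ℝ) Prod.snd (ContinuousLinearMap.snd ℝ ℂ ℂ) z := hasFDerivAt_snd
  have h1 := (hf.const_mul ((Real.sqrt 2 : ℂ))).mul hs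
  have h2 : HasFDerivAt (fun y : ℂ × ℂ => y.1 ^ 2)
      (z.1 • ContinuousLinearMap.fst ℝ ℂ ℂ + z.1 • ContinuousLinearMap.fst ℝ ℂ ℂ) z := by
    simpa [pow_two, Pi.mul_def] using hf.mul hf
  have h3 : HasFDerivAt (fun y : ℂ × ℂ => -Complex.I * y.2 ^ 2)
      ((-Complex.I) • (z.2 • ContinuousLinearMap.snd ℝ ℂ ℂ + z.2 • ContinuousLinearMap.snd ℝ ℂ ℂ)) z := by
    simpa [pow_two] using (hs.mul hs).const_mul (-Complex.I)
  have hD := HasFDerivAt.prodMk h1 (HasFDerivAt.prodMk h2 h3)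
  rw [(show HasFDerivAt brPi _ z from hD).fderiv]
  simp
  refine ⟨by ring, by ring, by ring⟩

theorem pullback_alphaEps (ε : ℝ) (hε : ε ∈ Set.Ioo (-1 : ℝ) 1)
    (z : ℂ × ℂ) (hz : z ≠ 0) (v : ℂ × ℂ) :
    alphaEps ε (brPi z) (fderiv ℝ brPi z v)
      = (2 / ((1 + ε) * ‖z.1‖ ^ 2 + (1 - ε) * ‖z.2‖ ^ 2)) *
          (((starRingEnd ℂ) z.1 * v.1).im + ((starRingEnd ℂ) z.2 * v.2).im) := by
  obtain ⟨hε1, hε2⟩ := hε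
  have hε1' : (0:ℝ) < 1 + ε := by linarith
  have hε2' : (0:ℝ) < 1 - ε := by linarith
  have hz' : z.1 ≠ 0 ∨ z.2 ≠ 0 := by
    by_contra h; push_neg at h; exact hz (Prod.ext h.1 h.2)
  set a : ℝ := ‖z.1‖ ^ 2 with ha
  set b : ℝ := ‖z.2‖ ^ 2 with hb
  have ha0 : 0 ≤ a := by positivity
  have hb0 : 0 ≤ b := by positivity
  have hden : 0 < (1 + ε) * a + (1 - ε) * b := by
    rcases hz' with h | h
    · have h' : 0 < a := by
        have := norm_pos_iff.mpr h; positivity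
      nlinarith
    · have h' : 0 < b := by
        have := norm_pos_iff.mpr h; positivity
      nlinarith
  have hab : 0 < a + b := by nlinarith
  have hs2 : Real.sqrt 2 * Real.sqrt 2 = 2 := Real.mul_self_sqrt (by norm_num)
  have key1 : Heps ε (brPi z) = (a + b) * ((1 + ε) * a + (1 - ε) * b) := by
    simp only [Heps, brPi, norm_mul, norm_pow, Complex.norm_real, Real.norm_eq_abs, norm_neg, Complex.norm_I,
      _root_.abs_of_nonneg (Real.sqrt_nonneg 2)]
    ring_nf
    rw [Real.sq_sqrt (by norm_num : (0:ℝ) ≤ 2)]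
    ring
  have key2 : (((starRingEnd ℂ) (brPi z).1 * ((Real.sqrt 2 : ℂ) * (v.1 * z.2 + z.1 * v.2))).im
      + ((starRingEnd ℂ) (brPi z).2.1 * (2 * z.1 * v.1)).im
      + ((starRingEnd ℂ) (brPi z).2.2 * (-Complex.I * (2 * z.2 * v.2))).im)
      = 2 * (a + b) * (((starRingEnd ℂ) z.1 * v.1).im + ((starRingEnd ℂ) z.2 * v.2).im) := by
    rw [ha, hb, Complex.sq_norm, Complex.sq_norm]
    simp only [brPi, Complex.mul_im, Complex.mul_re, Complex.conj_re, Complex.conj_im,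
      Complex.normSq_apply, Complex.ofReal_re, Complex.ofReal_im, Complex.I_re, Complex.I_im,
      Complex.neg_re, Complex.neg_im, pow_two, Complex.add_re, Complex.add_im, Complex.re_ofNat, Complex.im_ofNat]
    ring_nf
    rw [Real.sq_sqrt (by norm_num : (0:ℝ) ≤ 2)]
    ring
  rw [alphaEps, brPi_fderiv, key1]
  rw [key2]
  field_simp
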